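/- Let M be a commutative idempotent monoid acting additively on an abelian group G, F : M → G a function satisfying the chain rule, and X_1, …, X_n ∈ M. Then for every nonempty I ⊆ [n] the following two identities hold: (1) TC_F(;_{i∈I} X_i) = Σ_{∅ ≠ L ⊆ I} (|L| − 1) · X_{I∖L}.F(;_{l∈L} X_l); (2) (|I| − 1) · F(;_{i∈I} X_i) = Σ_{∅ ≠ L ⊆ I} (−1)^{|I|−|L|} · X_{I∖L}.TC_F(;_{l∈L} X_l) (integer multiples taken in G). -/

import Mathlib

namespace AMRF
/-- An additive monoid action of a commutative monoid `M` on an abelian group `G`. -/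
structure MAction (M G : Type*) [CommMonoid M] [AddCommGroup G] where
  act : M → G → G
  act_one : ∀ g, act 1 g = g
  act_mul : ∀ X Y g, act X (act Y g) = act (X * Y) g
  act_add : ∀ X g h, act X (g + h) = act X g + act X h

variable {M G : Type*} [CommMonoid M] [AddCommGroup G]

/-- `F : M → G` satisfies the chain rule `F(XY) = F(X) + X.F(Y)`. -/
def ChainRule (A : MAction M G) (F : M → G) : Prop :=
  ∀ X Y : M, F (X * Y) = F X + A.act X (F Y)

/-- Higher-order terms on a *reversed* argument list: the head of the list is the *last*
argument `Y_q` in `F_q(Y₁; …; Y_q)`. -/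
def Fseq (A : MAction M G) (F : M → G) : List M → G
  | [] => 0
  | [Y] => F Y
  | Y :: Z :: l => Fseq A F (Z :: l) - A.act Y (Fseq A F (Z :: l))

/-- `Fof A F [Y₁, …, Y_q] = F_q(Y₁; …; Y_q)`, defined inductively by
`F_q(Y₁; …; Y_q) = F_{q−1}(Y₁; …; Y_{q−1}) − Y_q.F_{q−1}(Y₁; …; Y_{q−1})`. -/
def Fof (A : MAction M G) (F : M → G) (l : List M) : G :=
  Fseq A F l.reverse

/-- The interaction term `F(;_{i∈I} X_i)`, with arguments in increasing index order. -/
def Fint (A : MAction M G) (F : M → G) {ι : Type*} [LinearOrder ι] (X : ι → M)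
    (I : Finset ι) : G :=
  Fof A F ((I.sort (· ≤ ·)).map X)

/-- The `F`-independence relation: `X ⊥_F Y | Z` iff `Z.F(X; Y) = 0`, where
`F(X; Y) = F(X) − Y.F(X)` is the second-order term. -/
def Findep (A : MAction M G) (F : M → G) (X Y Z : M) : Prop :=
  A.act Z (F X - A.act Y (F X)) = 0

/-- The `F`-total correlation `TC_F(;_{l∈L} X_l) = Σ_{l∈L} F(X_l) − F(X_L)`. -/
def TC (F : M → G) {ι : Type*} (X : ι → M) (L : Finset ι) : G :=
  (∑ l ∈ L, F (X l)) - F (∏ l ∈ L, X l)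

/-- `act X` as an additive monoid hom. -/
def MAction.hom (A : MAction M G) (X : M) : G →+ G where
  toFun := A.act X
  map_zero' := by
    have h := A.act_add X 0 0
    rw [add_zero] at h
    have h2 : A.act X 0 + 0 = A.act X 0 + A.act X 0 := by rw [add_zero]; exact h
    exact (add_left_cancel h2).symm
  map_add' := A.act_add X

@[simp] lemma MAction.hom_apply (A : MAction M G) (X : M) (g : G) :
    A.hom X g = A.act X g := rfl

lemma ChainRule.F_one {A : MAction M G} {F : M → G} (hF : ChainRule A F) : F 1 = 0 := by
  have h := hF 1 1
  rw [one_mul, A.act_one] at h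
  have h2 : F 1 + 0 = F 1 + F 1 := by rw [add_zero]; exact h
  exact (add_left_cancel h2).symm

section prods
variable {ι : Type*} [DecidableEq ι] (X : ι → M)

lemma prod_idem_self (hidem : ∀ x : M, x * x = x) (S : Finset ι) :
    (∏ a ∈ S, X a) * (∏ a ∈ S, X a) = ∏ a ∈ S, X a := by
  rw [← Finset.prod_mul_distrib]
  exact Finset.prod_congr rfl fun a _ => hidem _

lemma prod_absorb (hidem : ∀ x : M, x * x = x) {T B : Finset ι} (hTB : T ⊆ B) :
    (∏ a ∈ B, X a) * (∏ a ∈ T, X a) = ∏ a ∈ B, X a := by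
  have h1 : B = T ∪ (B \ T) := (Finset.union_sdiff_of_subset hTB).symm
  rw [h1, Finset.prod_union Finset.disjoint_sdiff, mul_right_comm,
    prod_idem_self X hidem]

lemma prod_union_idem (hidem : ∀ x : M, x * x = x) (B S : Finset ι) :
    (∏ a ∈ B, X a) * (∏ a ∈ S, X a) = ∏ a ∈ B ∪ S, X a := by
  have h1 : (∏ a ∈ S ∩ B, X a) * (∏ a ∈ S \ B, X a) = ∏ a ∈ S, X a :=
    Finset.prod_inter_mul_prod_diff S B X
  rw [← h1, ← mul_assoc, prod_absorb X hidem Finset.inter_subset_right,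
    ← Finset.prod_union Finset.disjoint_sdiff, Finset.union_sdiff_self_eq_union]

end prods

set_option linter.unusedSectionVars false

section FintLemmas
variable {M G : Type*} [CommMonoid M] [AddCommGroup G] {ι : Type*} [LinearOrder ι]

/-- `Hs F X S = F(X_S)`. -/
def Hs (F : M → G) (X : ι → M) (S : Finset ι) : G := F (∏ a ∈ S, X a)

lemma Hs_empty {F : M → G} {A : MAction M G} (hF : ChainRule A F) (X : ι → M) :
    Hs F X (∅ : Finset ι) = 0 := by
  simp [Hs, hF.F_one]

lemma act_Hs {F : M → G} {A : MAction M G} (hidem : ∀ x : M, x * x = x)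
    (hF : ChainRule A F) (X : ι → M) (B S : Finset ι) :
    A.act (∏ a ∈ B, X a) (Hs F X S) = Hs F X (B ∪ S) - Hs F X B := by
  have h := hF (∏ a ∈ B, X a) (∏ a ∈ S, X a)
  rw [prod_union_idem X hidem B S] at h
  unfold Hs
  rw [h]; abel

lemma sort_eq_sort_erase_max' (I : Finset ι) (h : I.Nonempty) :
    I.sort (· ≤ ·) = (I.erase (I.max' h)).sort (· ≤ ·) ++ [I.max' h] := by
  set m := I.max' h with hm
  refine (fun hp h1 h2 => List.Perm.eq_of_pairwise' (r := (· ≤ ·)) h1 h2 hp) ?_ ?_ ?_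
  · refine Multiset.coe_eq_coe.mp ?_
    rw [Finset.sort_eq, ← Multiset.coe_add, Finset.sort_eq, Finset.erase_val]
    rw [show (([m] : List ι) : Multiset ι) = {m} from rfl, add_comm,
      Multiset.singleton_add, Multiset.cons_erase (Finset.mem_val.mpr (I.max'_mem h))]
  · exact Finset.pairwise_sort _ _
  · rw [List.pairwise_append]
    refine ⟨Finset.pairwise_sort _ _, List.pairwise_singleton _ _, ?_⟩
    intro a ha b hb
    rw [List.mem_singleton] at hb
    subst hb
    exact I.le_max' a (Finset.mem_of_mem_erase ((Finset.mem_sort _).mp ha))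

lemma Fseq_cons (A : MAction M G) (F : M → G) (a : M) {l : List M} (hl : l ≠ []) :
    Fseq A F (a :: l) = Fseq A F l - A.act a (Fseq A F l) := by
  obtain ⟨z, l', rfl⟩ := List.exists_cons_of_ne_nil hl
  rfl

lemma Fint_singleton (A : MAction M G) (F : M → G) (X : ι → M) (i : ι) :
    Fint A F X ({i} : Finset ι) = F (X i) := by
  simp [Fint, Fof, Fseq]

lemma Fint_erase_max' (A : MAction M G) (F : M → G) (X : ι → M) (I : Finset ι)
    (h : I.Nonempty) (h2 : (I.erase (I.max' h)).Nonempty) :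
    Fint A F X I = Fint A F X (I.erase (I.max' h))
      - A.act (X (I.max' h)) (Fint A F X (I.erase (I.max' h))) := by
  set m := I.max' h with hm
  unfold Fint Fof
  rw [sort_eq_sort_erase_max' I h, ← hm, List.map_append, List.reverse_append]
  simp only [List.map_cons, List.map_nil, List.reverse_cons, List.reverse_nil,
    List.nil_append, List.singleton_append]
  apply Fseq_cons
  intro hnil
  have hlen := congrArg List.length hnil
  simp only [List.length_reverse, List.length_map, Finset.length_sort,
    List.length_nil] at hlen
  exact absurd (Finset.card_eq_zero.mp hlen) (Finset.nonempty_iff_ne_empty.mp h2)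

end FintLemmas

section Expansion
variable {M G : Type*} [CommMonoid M] [AddCommGroup G] {ι : Type*} [LinearOrder ι]

lemma neg_one_pow_sub_eq {a b : ℕ} (h : b ≤ a) :
    (-1 : ℤ) ^ (a - b) = (-1) ^ a * (-1) ^ b := by
  have h1 : (-1 : ℤ) ^ (a - b) = (-1) ^ (a - b) * ((-1) ^ 2) ^ b := by norm_num
  rw [h1, ← pow_mul, ← pow_add]
  have h2 : a - b + 2 * b = a + b := by omega
  rw [h2, pow_add]

lemma neg_one_pow_pred {c : ℕ} (h : 1 ≤ c) :
    (-1 : ℤ) ^ (c - 1) = -(-1) ^ c := by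
  have h1 : c = (c - 1) + 1 := by omega
  conv_rhs => rw [h1, pow_succ]
  ring

lemma sum_card_neg_one_pow {κ : Type*} [DecidableEq κ] (S : Finset κ) :
    ∑ K ∈ S.powerset, (K.card : ℤ) * (-1) ^ K.card
      = if S.card = 1 then -1 else 0 := by
  induction S using Finset.induction_on with
  | empty => simp
  | @insert a S ha ih =>
    rw [Finset.sum_powerset_insert ha]
    have h2 : ∑ K ∈ S.powerset, ((insert a K).card : ℤ) * (-1) ^ (insert a K).card
        = ∑ K ∈ S.powerset, (-((K.card : ℤ) * (-1) ^ K.card) - (-1) ^ K.card) := by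
      refine Finset.sum_congr rfl fun K hK => ?_
      have haK : a ∉ K := fun hc => ha ((Finset.mem_powerset.mp hK) hc)
      rw [Finset.card_insert_of_notMem haK]
      push_cast
      ring
    rw [h2, Finset.sum_sub_distrib, Finset.sum_neg_distrib, ih,
      Finset.sum_powerset_neg_one_pow_card, Finset.card_insert_of_notMem ha]
    by_cases hS : S = ∅
    · subst hS; simp
    · have h3 : S.card ≠ 0 := fun hc => hS (Finset.card_eq_zero.mp hc)
      have h4 : S.card + 1 ≠ 1 := by omega
      simp only [hS, if_neg, if_false, h4]
      ring

/-- Lemma A: inclusion–exclusion expansion of the interaction term. -/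
lemma Fint_eq_sum (hidem : ∀ x : M, x * x = x) (A : MAction M G) (F : M → G)
    (hF : ChainRule A F) (X : ι → M) (I : Finset ι) (hI : I.Nonempty) :
    Fint A F X I = ∑ T ∈ I.powerset, (-1 : ℤ) ^ (T.card + 1) • Hs F X T := by
  classical
  induction I using Finset.strongInduction with
  | _ I ih =>
  rcases Finset.eq_empty_or_nonempty I with rfl | hI'
  · exact absurd rfl (Finset.nonempty_iff_ne_empty.mp hI)
  set m := I.max' hI' with hm
  have hmI : m ∈ I := I.max'_mem hI'
  rcases Finset.eq_empty_or_nonempty (I.erase m) with hE | hE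
  · -- I = {m}
    have hIm : I = {m} := by
      rcases (Finset.erase_eq_empty_iff I m).mp hE with h | h
      · exact absurd h (Finset.nonempty_iff_ne_empty.mp hI')
      · exact h
    rw [hIm, Fint_singleton,
      show ({m} : Finset ι) = insert m (∅ : Finset ι) from rfl,
      Finset.sum_powerset_insert (Finset.notMem_empty m), Finset.powerset_empty,
      Finset.sum_singleton, Finset.sum_singleton, Hs_empty hF X]
    simp [Hs]
  · -- inductive step
    have hsub : I.erase m ⊂ I := Finset.erase_ssubset hmI
    have hrec := Fint_erase_max' A F X I hI' hE
    rw [← hm] at hrec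
    rw [hrec, ih (I.erase m) hsub hE]
    have hact : A.act (X m) (∑ T ∈ (I.erase m).powerset, (-1 : ℤ) ^ (T.card + 1) • Hs F X T)
        = ∑ T ∈ (I.erase m).powerset, (-1 : ℤ) ^ (T.card + 1) • (Hs F X (insert m T) - Hs F X {m}) := by
      rw [show A.act (X m) = ⇑(A.hom (X m)) from rfl, map_sum]
      refine Finset.sum_congr rfl fun T hT => ?_
      rw [map_zsmul, MAction.hom_apply]
      have : A.act (X m) (Hs F X T) = Hs F X ({m} ∪ T) - Hs F X {m} := by
        have := act_Hs hidem hF X {m} T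
        rwa [Finset.prod_singleton] at this
      rw [this, ← Finset.insert_eq]
    rw [hact]
    have hsplit : ∑ T ∈ (I.erase m).powerset,
          (-1 : ℤ) ^ (T.card + 1) • (Hs F X (insert m T) - Hs F X {m})
        = (∑ T ∈ (I.erase m).powerset, (-1 : ℤ) ^ (T.card + 1) • Hs F X (insert m T))
          - (∑ T ∈ (I.erase m).powerset, (-1 : ℤ) ^ (T.card + 1)) • Hs F X {m} := by
      rw [Finset.sum_smul]
      rw [← Finset.sum_sub_distrib]
      exact Finset.sum_congr rfl fun T hT => smul_sub _ _ _
    have hzero : (∑ T ∈ (I.erase m).powerset, (-1 : ℤ) ^ (T.card + 1)) = 0 := by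
      have : ∑ T ∈ (I.erase m).powerset, (-1 : ℤ) ^ (T.card + 1)
          = -∑ T ∈ (I.erase m).powerset, (-1 : ℤ) ^ T.card := by
        rw [← Finset.sum_neg_distrib]
        exact Finset.sum_congr rfl fun T hT => by rw [pow_succ]; ring
      rw [this, Finset.sum_powerset_neg_one_pow_card_of_nonempty hE, neg_zero]
    rw [hsplit, hzero, zero_smul, sub_zero]
    -- now RHS: powerset of I = insert m (erase m)
    have hIins : I = insert m (I.erase m) := (Finset.insert_erase hmI).symm
    have hmE : m ∉ I.erase m := Finset.notMem_erase m I
    conv_rhs => rw [hIins]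
    rw [Finset.sum_powerset_insert hmE]
    have hlast : ∑ T ∈ (I.erase m).powerset, (-1 : ℤ) ^ ((insert m T).card + 1) • Hs F X (insert m T)
        = -∑ T ∈ (I.erase m).powerset, (-1 : ℤ) ^ (T.card + 1) • Hs F X (insert m T) := by
      rw [← Finset.sum_neg_distrib]
      refine Finset.sum_congr rfl fun T hT => ?_
      have haT : m ∉ T := fun hc => hmE ((Finset.mem_powerset.mp hT) hc)
      rw [Finset.card_insert_of_notMem haT, pow_succ, mul_smul]
      simp
    rw [hlast]
    abel

/-- Lemma B: action of any product on the interaction term. -/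
lemma act_Fint (hidem : ∀ x : M, x * x = x) (A : MAction M G) (F : M → G)
    (hF : ChainRule A F) (X : ι → M) (B : Finset ι) (L : Finset ι) (hL : L.Nonempty) :
    A.act (∏ a ∈ B, X a) (Fint A F X L)
      = ∑ T ∈ L.powerset, (-1 : ℤ) ^ (T.card + 1) • Hs F X (B ∪ T) := by
  classical
  rw [Fint_eq_sum hidem A F hF X L hL]
  rw [show A.act (∏ a ∈ B, X a) = ⇑(A.hom (∏ a ∈ B, X a)) from rfl, map_sum]
  have h1 : ∀ T ∈ L.powerset, A.hom (∏ a ∈ B, X a) ((-1 : ℤ) ^ (T.card + 1) • Hs F X T)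
      = (-1 : ℤ) ^ (T.card + 1) • Hs F X (B ∪ T) - (-1 : ℤ) ^ (T.card + 1) • Hs F X B := by
    intro T hT
    rw [map_zsmul, MAction.hom_apply, act_Hs hidem hF X B T, smul_sub]
  rw [Finset.sum_congr rfl h1, Finset.sum_sub_distrib, ← Finset.sum_smul]
  have hzero : (∑ T ∈ L.powerset, (-1 : ℤ) ^ (T.card + 1)) = 0 := by
    have : ∑ T ∈ L.powerset, (-1 : ℤ) ^ (T.card + 1)
        = -∑ T ∈ L.powerset, (-1 : ℤ) ^ T.card := by
      rw [← Finset.sum_neg_distrib]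
      exact Finset.sum_congr rfl fun T hT => by rw [pow_succ]; ring
    rw [this, Finset.sum_powerset_neg_one_pow_card_of_nonempty hL, neg_zero]
  rw [hzero, zero_smul, sub_zero]

end Expansion

section Main
variable {M G : Type*} [CommMonoid M] [AddCommGroup G] {ι : Type*} [LinearOrder ι]

lemma sigma_eq {a b c d : Finset ι} (h1 : a = c) (h2 : b = d) :
    (⟨a, b⟩ : Σ _ : Finset ι, Finset ι) = ⟨c, d⟩ := by
  subst h1; subst h2; rfl

lemma coeff_transform {S K : Finset ι} (hKS : K ⊆ S) :
    (-1 : ℤ) ^ ((S \ K).card + 1) = (-1) ^ (S.card + 1) * (-1) ^ K.card := by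
  rw [Finset.card_sdiff_of_subset hKS, pow_succ, neg_one_pow_sub_eq (Finset.card_le_card hKS),
    pow_succ]
  ring

lemma statement1 (hidem : ∀ x : M, x * x = x) (A : MAction M G) (F : M → G)
    (hF : ChainRule A F) (X : ι → M) (I : Finset ι) (hI : I.Nonempty) :
    TC F X I = ∑ L ∈ I.powerset.filter (fun L => L.Nonempty),
      ((L.card : ℤ) - 1) • A.act (∏ a ∈ I \ L, X a) (Fint A F X L) := by
  classical
  set N := I.card with hN
  -- Step 1: expand each summand
  have step1 : ∀ L ∈ I.powerset.filter (fun L => L.Nonempty),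
      ((L.card : ℤ) - 1) • A.act (∏ a ∈ I \ L, X a) (Fint A F X L)
      = ∑ T ∈ L.powerset, (((L.card : ℤ) - 1) * (-1) ^ (T.card + 1)) • Hs F X ((I \ L) ∪ T) := by
    intro L hL
    rw [Finset.mem_filter] at hL
    rw [act_Fint hidem A F hF X (I \ L) L hL.2, Finset.smul_sum]
    exact Finset.sum_congr rfl fun T hT => by rw [smul_smul]
  rw [Finset.sum_congr rfl step1, Finset.sum_sigma']
  -- Step 2: reindex the sigma sum
  have step2 : ∑ p ∈ (I.powerset.filter (fun L => L.Nonempty)).sigma (fun L => L.powerset),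
        (((p.1.card : ℤ) - 1) * (-1) ^ (p.2.card + 1)) • Hs F X ((I \ p.1) ∪ p.2)
      = ∑ p ∈ I.powerset.sigma (fun S => S.powerset.erase I),
        ((((I \ p.2).card : ℤ) - 1) * (-1) ^ ((p.1 \ p.2).card + 1)) • Hs F X p.1 := by
    refine Finset.sum_bij'
      (fun p _ => (⟨(I \ p.1) ∪ p.2, I \ p.1⟩ : Σ _ : Finset ι, Finset ι))
      (fun p _ => (⟨I \ p.2, p.1 \ p.2⟩ : Σ _ : Finset ι, Finset ι)) ?_ ?_ ?_ ?_ ?_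
    · -- hi : maps into target
      rintro ⟨L, T⟩ hp
      rw [Finset.mem_sigma, Finset.mem_filter, Finset.mem_powerset] at hp
      obtain ⟨⟨hLI, hLne⟩, hTL⟩ := hp
      rw [Finset.mem_powerset] at hTL
      rw [Finset.mem_sigma, Finset.mem_powerset]
      refine ⟨Finset.union_subset (Finset.sdiff_subset) (hTL.trans hLI), ?_⟩
      rw [Finset.mem_erase, Finset.mem_powerset]
      refine ⟨?_, Finset.subset_union_left⟩
      intro hKI
      have hKI' : I \ L = I := hKI
      obtain ⟨l, hl⟩ := hLne
      have hlI : l ∈ I := hLI hl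
      have : l ∈ I \ L := by rw [hKI']; exact hlI
      exact (Finset.mem_sdiff.mp this).2 hl
    · -- hj : maps back
      rintro ⟨S, K⟩ hp
      rw [Finset.mem_sigma, Finset.mem_powerset, Finset.mem_erase, Finset.mem_powerset] at hp
      obtain ⟨hSI, hKne, hKS⟩ := hp
      rw [Finset.mem_sigma, Finset.mem_filter, Finset.mem_powerset, Finset.mem_powerset]
      refine ⟨⟨Finset.sdiff_subset, ?_⟩, Finset.sdiff_subset_sdiff hSI (le_refl K)⟩
      rw [Finset.sdiff_nonempty]
      intro hIK
      exact hKne (Finset.Subset.antisymm (hKS.trans hSI) hIK)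
    · -- left inverse
      rintro ⟨L, T⟩ hp
      rw [Finset.mem_sigma, Finset.mem_filter, Finset.mem_powerset] at hp
      obtain ⟨⟨hLI, hLne⟩, hTL⟩ := hp
      rw [Finset.mem_powerset] at hTL
      exact sigma_eq (Finset.sdiff_sdiff_eq_self hLI)
        (Finset.union_sdiff_cancel_left (Finset.sdiff_disjoint.mono_right hTL))
    · -- right inverse
      rintro ⟨S, K⟩ hp
      rw [Finset.mem_sigma, Finset.mem_powerset, Finset.mem_erase, Finset.mem_powerset] at hp
      obtain ⟨hSI, hKne, hKS⟩ := hp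
      refine sigma_eq ?_ (Finset.sdiff_sdiff_eq_self (hKS.trans hSI))
      rw [Finset.sdiff_sdiff_eq_self (hKS.trans hSI)]
      exact Finset.union_sdiff_of_subset hKS
    · -- values agree
      rintro ⟨L, T⟩ hp
      rw [Finset.mem_sigma, Finset.mem_filter, Finset.mem_powerset] at hp
      obtain ⟨⟨hLI, hLne⟩, hTL⟩ := hp
      rw [Finset.mem_powerset] at hTL
      simp only
      rw [Finset.sdiff_sdiff_eq_self hLI,
        Finset.union_sdiff_cancel_left (Finset.sdiff_disjoint.mono_right hTL)]
  rw [step2, Finset.sum_sigma]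
  -- Step 3: evaluate inner coefficient sums
  have inner_coeff : ∀ S ∈ I.powerset,
      (∑ K ∈ S.powerset.erase I, (((I \ K).card : ℤ) - 1) * (-1) ^ ((S \ K).card + 1))
      = (if S.card = 1 then 1 else 0) - (if S = I then 1 else 0)
        + (if S = ∅ then 1 - (N : ℤ) else 0) := by
    intro S hS
    rw [Finset.mem_powerset] at hS
    have hterm : ∀ K ∈ S.powerset, (((I \ K).card : ℤ) - 1) * (-1) ^ ((S \ K).card + 1)
        = (-1) ^ (S.card + 1) * (((N : ℤ) - 1) * (-1) ^ K.card - (K.card : ℤ) * (-1) ^ K.card) := by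
      intro K hK
      rw [Finset.mem_powerset] at hK
      have hKI : K ⊆ I := hK.trans hS
      rw [coeff_transform hK, Finset.card_sdiff_of_subset hKI, ← hN]
      have hle : K.card ≤ N := Finset.card_le_card hKI
      push_cast [Nat.cast_sub hle]
      ring
    have hfull : ∑ K ∈ S.powerset, (((I \ K).card : ℤ) - 1) * (-1) ^ ((S \ K).card + 1)
        = (-1) ^ (S.card + 1) *
          (((N : ℤ) - 1) * (if S = ∅ then 1 else 0) - (if S.card = 1 then -1 else 0)) := by
      rw [Finset.sum_congr rfl hterm, ← Finset.mul_sum, Finset.sum_sub_distrib,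
        ← Finset.mul_sum, Finset.sum_powerset_neg_one_pow_card, sum_card_neg_one_pow]
    by_cases hSI : S = I
    · -- erase removes the K = I term
      rw [hSI] at hfull ⊢
      have hmem : I ∈ I.powerset := Finset.mem_powerset.mpr subset_rfl
      rw [Finset.sum_erase_eq_sub hmem, hfull]
      have h1 : (((I \ I).card : ℤ) - 1) * (-1) ^ ((I \ I).card + 1) = 1 := by
        simp [Finset.sdiff_self]
      rw [h1]
      have hSne : (I : Finset ι) ≠ ∅ := Finset.nonempty_iff_ne_empty.mp hI
      by_cases hc : I.card = 1
      · simp [hSne, hc]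
      · simp [hSne, hc]
    · have hIS : I ∉ S.powerset := by
        rw [Finset.mem_powerset]
        intro hc
        exact hSI (Finset.Subset.antisymm hS hc)
      rw [Finset.erase_eq_of_notMem hIS, hfull]
      simp only [hSI, if_false, sub_zero, add_zero]
      by_cases hSe : S = ∅
      · subst hSe
        simp
      · simp only [hSe, if_false, mul_zero, zero_sub, sub_zero]
        by_cases hc1 : S.card = 1
        · rw [if_pos hc1, if_pos hc1, hc1]
          norm_num
        · rw [if_neg hc1, if_neg hc1]
          ring
  -- Step 4: final assembly
  have reduce : ∀ S ∈ I.powerset,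
      (∑ K ∈ S.powerset.erase I,
        ((((I \ K).card : ℤ) - 1) * (-1) ^ ((S \ K).card + 1)) • Hs F X S)
      = (if S.card = 1 then Hs F X S else 0) - (if S = I then Hs F X S else 0)
        + (if S = ∅ then (1 - (N : ℤ)) • Hs F X S else 0) := by
    intro S hS
    rw [← Finset.sum_smul, inner_coeff S hS]
    split_ifs <;> simp [sub_smul, add_smul, one_smul, zero_smul]
  rw [Finset.sum_congr rfl reduce, Finset.sum_add_distrib, Finset.sum_sub_distrib]
  have s1 : ∑ S ∈ I.powerset, (if S.card = 1 then Hs F X S else 0) = ∑ i ∈ I, F (X i) := by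
    rw [← Finset.sum_filter, ← Finset.powersetCard_eq_filter, Finset.powersetCard_one,
      Finset.sum_map]
    exact Finset.sum_congr rfl fun i _ => by simp [Hs]
  have s2 : ∑ S ∈ I.powerset, (if S = I then Hs F X S else 0) = Hs F X I := by
    rw [Finset.sum_ite_eq' I.powerset I (fun S => Hs F X S)]
    rw [if_pos (Finset.mem_powerset.mpr subset_rfl)]
  have s3 : ∑ S ∈ I.powerset, (if S = ∅ then (1 - (N : ℤ)) • Hs F X S else 0) = 0 := by
    rw [Finset.sum_ite_eq' I.powerset ∅ (fun S => (1 - (N : ℤ)) • Hs F X S)]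
    rw [if_pos (Finset.mem_powerset.mpr (Finset.empty_subset I))]
    rw [Hs_empty hF X, smul_zero]
  rw [s1, s2, s3, add_zero]
  rfl

end Main

section Main2
variable {M G : Type*} [CommMonoid M] [AddCommGroup G] {ι : Type*} [LinearOrder ι]

set_option maxHeartbeats 2000000 in
lemma statement2 (hidem : ∀ x : M, x * x = x) (A : MAction M G) (F : M → G)
    (hF : ChainRule A F) (X : ι → M) (I : Finset ι) (hI : I.Nonempty) :
    ((I.card : ℤ) - 1) • Fint A F X I
      = ∑ L ∈ I.powerset.filter (fun L => L.Nonempty),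
          (-1 : ℤ) ^ (I.card - L.card) • A.act (∏ a ∈ I \ L, X a) (TC F X L) := by
  classical
  set N := I.card with hN
  -- expand each summand into three pieces
  have expand : ∀ L ∈ I.powerset.filter (fun L => L.Nonempty),
      (-1 : ℤ) ^ (N - L.card) • A.act (∏ a ∈ I \ L, X a) (TC F X L)
      = (∑ l ∈ L, (-1 : ℤ) ^ (N - L.card) • Hs F X (insert l (I \ L)))
        - ((-1 : ℤ) ^ (N - L.card) * ((L.card : ℤ) - 1)) • Hs F X (I \ L)
        - (-1 : ℤ) ^ (N - L.card) • Hs F X I := by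
    intro L hL
    rw [Finset.mem_filter, Finset.mem_powerset] at hL
    obtain ⟨hLI, hLne⟩ := hL
    have hTC : TC F X L = (∑ l ∈ L, Hs F X {l}) - Hs F X L := by
      unfold TC Hs
      congr 1
      exact Finset.sum_congr rfl fun l _ => by rw [Finset.prod_singleton]
    have hact : A.act (∏ a ∈ I \ L, X a) (TC F X L)
        = (∑ l ∈ L, Hs F X (insert l (I \ L)))
          - ((L.card : ℤ) - 1) • Hs F X (I \ L) - Hs F X I := by
      rw [hTC, show A.act (∏ a ∈ I \ L, X a) = ⇑(A.hom (∏ a ∈ I \ L, X a)) from rfl,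
        map_sub, map_sum]
      have h1 : ∀ l ∈ L, A.hom (∏ a ∈ I \ L, X a) (Hs F X {l})
          = Hs F X (insert l (I \ L)) - Hs F X (I \ L) := by
        intro l hl
        rw [MAction.hom_apply, act_Hs hidem hF X (I \ L) {l}]
        congr 2
        rw [Finset.union_comm, ← Finset.insert_eq]
      have h2 : A.hom (∏ a ∈ I \ L, X a) (Hs F X L) = Hs F X I - Hs F X (I \ L) := by
        rw [MAction.hom_apply, act_Hs hidem hF X (I \ L) L,
          Finset.sdiff_union_of_subset hLI]
      rw [Finset.sum_congr rfl h1, h2, Finset.sum_sub_distrib, Finset.sum_const]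
      have h3 : (L.card : ℤ) • Hs F X (I \ L) = L.card • Hs F X (I \ L) := natCast_zsmul _ _
      rw [sub_smul, one_smul, h3]
      abel
    rw [hact, smul_sub, smul_sub, Finset.smul_sum, ← smul_smul]
  rw [Finset.sum_congr rfl expand, Finset.sum_sub_distrib, Finset.sum_sub_distrib]
  -- Sum3 : constant Hs I part
  have hfilter : I.powerset.filter (fun L => L.Nonempty) = I.powerset.erase ∅ := by
    rw [← Finset.filter_ne']
    exact Finset.filter_congr fun L _ => by
      simp [Finset.nonempty_iff_ne_empty]
  have scalar_pow : ∀ L ∈ I.powerset, (-1 : ℤ) ^ (N - L.card) = (-1) ^ N * (-1) ^ L.card :=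
    fun L hL => neg_one_pow_sub_eq (Finset.card_le_card (Finset.mem_powerset.mp hL))
  have sum3 : ∑ L ∈ I.powerset.filter (fun L => L.Nonempty),
      (-1 : ℤ) ^ (N - L.card) • Hs F X I = (-(-1 : ℤ) ^ N) • Hs F X I := by
    rw [← Finset.sum_smul]
    congr 1
    rw [hfilter, Finset.sum_erase_eq_sub (Finset.mem_powerset.mpr (Finset.empty_subset I))]
    have h2 : ∑ L ∈ I.powerset, (-1 : ℤ) ^ (N - L.card) = 0 := by
      rw [Finset.sum_congr rfl scalar_pow, ← Finset.mul_sum,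
        Finset.sum_powerset_neg_one_pow_card_of_nonempty hI, mul_zero]
    rw [h2, Finset.card_empty, Nat.sub_zero]
    ring
  -- Sum2 : reindex K = I \ L
  have sum2 : ∑ L ∈ I.powerset.filter (fun L => L.Nonempty),
      ((-1 : ℤ) ^ (N - L.card) * ((L.card : ℤ) - 1)) • Hs F X (I \ L)
      = ∑ K ∈ I.powerset.erase I,
        ((-1 : ℤ) ^ K.card * (((I \ K).card : ℤ) - 1)) • Hs F X K := by
    refine Finset.sum_bij' (fun L _ => I \ L) (fun K _ => I \ K) ?_ ?_ ?_ ?_ ?_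
    · intro L hL
      rw [Finset.mem_filter, Finset.mem_powerset] at hL
      obtain ⟨hLI, hLne⟩ := hL
      rw [Finset.mem_erase, Finset.mem_powerset]
      refine ⟨?_, Finset.sdiff_subset⟩
      intro hKI
      have hKI' : I \ L = I := hKI
      obtain ⟨l, hl⟩ := hLne
      have : l ∈ I \ L := by rw [hKI']; exact hLI hl
      exact (Finset.mem_sdiff.mp this).2 hl
    · intro K hK
      rw [Finset.mem_erase, Finset.mem_powerset] at hK
      obtain ⟨hKne, hKI⟩ := hK
      rw [Finset.mem_filter, Finset.mem_powerset]
      refine ⟨Finset.sdiff_subset, ?_⟩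
      rw [Finset.sdiff_nonempty]
      intro hIK
      exact hKne (Finset.Subset.antisymm hKI hIK)
    · intro L hL
      rw [Finset.mem_filter, Finset.mem_powerset] at hL
      exact Finset.sdiff_sdiff_eq_self hL.1
    · intro K hK
      rw [Finset.mem_erase, Finset.mem_powerset] at hK
      exact Finset.sdiff_sdiff_eq_self hK.2
    · intro L hL
      rw [Finset.mem_filter, Finset.mem_powerset] at hL
      obtain ⟨hLI, hLne⟩ := hL
      show ((-1 : ℤ) ^ (N - L.card) * ((L.card : ℤ) - 1)) • Hs F X (I \ L)
        = ((-1 : ℤ) ^ (I \ L).card * (((I \ (I \ L)).card : ℤ) - 1)) • Hs F X (I \ L)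
      rw [Finset.card_sdiff_of_subset hLI, Finset.sdiff_sdiff_eq_self hLI, ← hN]
  -- Sum1 : extend to full powerset, then reindex
  have sum1ext : ∑ L ∈ I.powerset.filter (fun L => L.Nonempty),
      (∑ l ∈ L, (-1 : ℤ) ^ (N - L.card) • Hs F X (insert l (I \ L)))
      = ∑ L ∈ I.powerset, ∑ l ∈ L, (-1 : ℤ) ^ (N - L.card) • Hs F X (insert l (I \ L)) := by
    refine Finset.sum_subset (Finset.filter_subset _ _) ?_
    intro L hL hnL
    rw [Finset.mem_filter] at hnL
    have hLe : L = ∅ := by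
      by_contra hc
      exact hnL ⟨hL, Finset.nonempty_iff_ne_empty.mpr hc⟩
    subst hLe
    simp
  have sum1 : ∑ L ∈ I.powerset, ∑ l ∈ L, (-1 : ℤ) ^ (N - L.card) • Hs F X (insert l (I \ L))
      = ∑ S ∈ I.powerset, ((S.card : ℤ) * (-1) ^ (S.card - 1)) • Hs F X S := by
    rw [Finset.sum_sigma']
    have hbij : ∑ p ∈ I.powerset.sigma (fun L => L),
          (-1 : ℤ) ^ (N - p.1.card) • Hs F X (insert p.2 (I \ p.1))
        = ∑ p ∈ I.powerset.sigma (fun S => S), (-1 : ℤ) ^ (p.1.card - 1) • Hs F X p.1 := by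
      refine Finset.sum_bij'
        (fun (p : Σ _ : Finset ι, ι) _ => (⟨insert p.2 (I \ p.1), p.2⟩ : Σ _ : Finset ι, ι))
        (fun (p : Σ _ : Finset ι, ι) _ => (⟨I \ (p.1.erase p.2), p.2⟩ : Σ _ : Finset ι, ι))
        ?_ ?_ ?_ ?_ ?_
      · rintro ⟨L, l⟩ hp
        rw [Finset.mem_sigma, Finset.mem_powerset] at hp
        obtain ⟨hLI, hlL⟩ := hp
        rw [Finset.mem_sigma, Finset.mem_powerset]
        exact ⟨Finset.insert_subset (hLI hlL) Finset.sdiff_subset,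
          Finset.mem_insert_self _ _⟩
      · rintro ⟨S, l⟩ hp
        rw [Finset.mem_sigma, Finset.mem_powerset] at hp
        obtain ⟨hSI, hlS⟩ := hp
        rw [Finset.mem_sigma, Finset.mem_powerset]
        refine ⟨Finset.sdiff_subset, ?_⟩
        rw [Finset.mem_sdiff]
        exact ⟨hSI hlS, Finset.notMem_erase l S⟩
      · rintro ⟨L, l⟩ hp
        rw [Finset.mem_sigma, Finset.mem_powerset] at hp
        obtain ⟨hLI, hlL⟩ := hp
        have h1 : (insert l (I \ L)).erase l = I \ L := by
          apply Finset.erase_insert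
          rw [Finset.mem_sdiff]
          intro hc
          exact hc.2 hlL
        have h2 : I \ (I \ L) = L := Finset.sdiff_sdiff_eq_self hLI
        show (⟨I \ ((insert l (I \ L)).erase l), l⟩ : Σ _ : Finset ι, ι) = ⟨L, l⟩
        rw [h1, h2]
      · rintro ⟨S, l⟩ hp
        rw [Finset.mem_sigma, Finset.mem_powerset] at hp
        obtain ⟨hSI, hlS⟩ := hp
        have h1 : I \ (I \ (S.erase l)) = S.erase l :=
          Finset.sdiff_sdiff_eq_self ((Finset.erase_subset l S).trans hSI)
        have h2 : insert l (S.erase l) = S := Finset.insert_erase hlS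
        show (⟨insert l ((I \ (I \ (S.erase l)))), l⟩ : Σ _ : Finset ι, ι) = ⟨S, l⟩
        rw [h1, h2]
      · rintro ⟨L, l⟩ hp
        rw [Finset.mem_sigma, Finset.mem_powerset] at hp
        obtain ⟨hLI, hlL⟩ := hp
        have hlnot : l ∉ I \ L := by
          rw [Finset.mem_sdiff]
          intro hc
          exact hc.2 hlL
        show (-1 : ℤ) ^ (N - L.card) • Hs F X (insert l (I \ L))
          = (-1 : ℤ) ^ ((insert l (I \ L)).card - 1) • Hs F X (insert l (I \ L))
        rw [Finset.card_insert_of_notMem hlnot, Finset.card_sdiff_of_subset hLI, ← hN,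
          Nat.add_sub_cancel]
    rw [hbij, Finset.sum_sigma]
    refine Finset.sum_congr rfl fun S hS => ?_
    show (∑ _s ∈ S, (-1 : ℤ) ^ (S.card - 1) • Hs F X S)
      = ((S.card : ℤ) * (-1) ^ (S.card - 1)) • Hs F X S
    rw [Finset.sum_const, ← natCast_zsmul, smul_smul]
  rw [sum1ext, sum1, sum2, sum3]
  -- correct the erased term in sum2
  have sum2' : ∑ K ∈ I.powerset.erase I,
      ((-1 : ℤ) ^ K.card * (((I \ K).card : ℤ) - 1)) • Hs F X K
      = (∑ K ∈ I.powerset, ((-1 : ℤ) ^ K.card * (((I \ K).card : ℤ) - 1)) • Hs F X K)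
        + (-1 : ℤ) ^ N • Hs F X I := by
    rw [Finset.sum_erase_eq_sub (Finset.mem_powerset.mpr subset_rfl)]
    have h5 : ((-1 : ℤ) ^ I.card * (((I \ I).card : ℤ) - 1)) = -((-1 : ℤ) ^ N) := by
      rw [Finset.sdiff_self, Finset.card_empty, ← hN]
      norm_num
    rw [h5, neg_smul]
    abel
  rw [sum2']
  -- combine all powerset sums
  rw [Fint_eq_sum hidem A F hF X I hI, Finset.smul_sum]
  have final : ∀ S ∈ I.powerset,
      ((S.card : ℤ) * (-1) ^ (S.card - 1)) • Hs F X S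
        - ((-1 : ℤ) ^ S.card * (((I \ S).card : ℤ) - 1)) • Hs F X S
      = ((N : ℤ) - 1) • (-1 : ℤ) ^ (S.card + 1) • Hs F X S := by
    intro S hS
    rw [Finset.mem_powerset] at hS
    rw [← sub_smul, smul_smul]
    congr 1
    rw [Finset.card_sdiff_of_subset hS, ← hN]
    have hle : S.card ≤ N := Finset.card_le_card hS
    push_cast [Nat.cast_sub hle]
    rcases Nat.eq_zero_or_pos S.card with h0 | h1
    · rw [h0]
      norm_num
    · rw [neg_one_pow_pred h1, pow_succ]
      ring
  have combine : (∑ S ∈ I.powerset, ((S.card : ℤ) * (-1) ^ (S.card - 1)) • Hs F X S)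
      - ∑ K ∈ I.powerset, ((-1 : ℤ) ^ K.card * (((I \ K).card : ℤ) - 1)) • Hs F X K
      = ∑ S ∈ I.powerset, ((N : ℤ) - 1) • (-1 : ℤ) ^ (S.card + 1) • Hs F X S := by
    rw [← Finset.sum_sub_distrib]
    exact Finset.sum_congr rfl final
  rw [← combine]
  have hd : (-(-1 : ℤ) ^ N) • Hs F X I = -(((-1 : ℤ) ^ N) • Hs F X I) := neg_zsmul _ _
  rw [hd]
  abel

end Main2


/-- For every nonempty `I ⊆ [n]`:
(1) `TC_F(;_{i∈I} Xᵢ) = Σ_{∅≠L⊆I} (|L|−1) · X_{I∖L}.F(;_{l∈L} X_l)`;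
(2) `(|I|−1) · F(;_{i∈I} Xᵢ) = Σ_{∅≠L⊆I} (−1)^{|I|−|L|} · X_{I∖L}.TC_F(;_{l∈L} X_l)`. -/
theorem TC_interaction_formulas
    {M G : Type*} [CommMonoid M] [AddCommGroup G]
    (hidem : ∀ x : M, x * x = x)
    (A : MAction M G) (F : M → G) (hF : ChainRule A F)
    (n : ℕ) (X : Fin n → M) (I : Finset (Fin n)) (hI : I.Nonempty) :
    (TC F X I =
      ∑ L ∈ I.powerset.filter (fun L => L.Nonempty),
        ((L.card : ℤ) - 1) • A.act (∏ a ∈ I \ L, X a) (Fint A F X L)) ∧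
    (((I.card : ℤ) - 1) • Fint A F X I =
      ∑ L ∈ I.powerset.filter (fun L => L.Nonempty),
        (-1 : ℤ) ^ (I.card - L.card) • A.act (∏ a ∈ I \ L, X a) (TC F X L)) := by
  constructor
  · convert statement1 hidem A F hF X I hI using 2 <;> congr!
  · convert statement2 hidem A F hF X I hI using 2 <;> congr!

end AMRF
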